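/- Let Φ be a root system with Weyl group W, J ⊆ Δ, and let 𝒱 ⊆ Φ⁺ be any subset of positive roots. For w ∈ W written as w = vy with v the minimal-length coset representative of wW_J and y ∈ W_J, the following identity holds: |N(w⁻¹) ∩ 𝒱ᶜ| + |N(w⁻¹) ∩ 𝒱 ∩ w(Φ_J⁻)| = |N(v⁻¹) ∩ 𝒱ᶜ| + ℓ(y), where 𝒱ᶜ = Φ⁺ − 𝒱 and ℓ is the length function. -/

import Mathlib

/-- Simple reflection `s_i` in `S_{n+1}` (type `A_n`), swapping positions `i` and `i+1`. -/
def sgen {n : ℕ} (i : Fin n) : Equiv.Perm (Fin (n + 1)) :=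
  Equiv.swap i.castSucc i.succ

/-- Action of a permutation on a root `ε_{p.1} - ε_{p.2}` of type `A`. -/
def actRoot {n : ℕ} (w : Equiv.Perm (Fin n)) (p : Fin n × Fin n) : Fin n × Fin n :=
  (w p.1, w p.2)

/-- The root `ε_{p.1} - ε_{p.2}` is positive. -/
def IsPosRoot {n : ℕ} (p : Fin n × Fin n) : Prop := p.1 < p.2

/-- The root `ε_{p.1} - ε_{p.2}` is negative. -/
def IsNegRoot {n : ℕ} (p : Fin n × Fin n) : Prop := p.2 < p.1

/-- Inversion set `N(w) = {γ ∈ Φ⁺ : w(γ) ∈ Φ⁻}`. -/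
def invSet {n : ℕ} (w : Equiv.Perm (Fin n)) : Set (Fin n × Fin n) :=
  {p | IsPosRoot p ∧ IsNegRoot (actRoot w p)}

/-- Bruhat length = number of inversions. -/
def len {n : ℕ} (w : Equiv.Perm (Fin n)) : ℕ :=
  (Finset.univ.filter fun p : Fin n × Fin n => p.1 < p.2 ∧ w p.2 < w p.1).card

/-- The parabolic subgroup `W_J` generated by the simple reflections indexed by `J`. -/
def WJ {n : ℕ} (J : Set (Fin n)) : Subgroup (Equiv.Perm (Fin (n + 1))) :=
  Subgroup.closure (sgen '' J)

/-- Membership in the sub-root-system `Φ_J` spanned by the simple roots indexed by `J`: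
all simple roots in the support of the root lie in `J`. -/
def InPhiJ {n : ℕ} (J : Set (Fin n)) (p : Fin (n + 1) × Fin (n + 1)) : Prop :=
  p.1 ≠ p.2 ∧ ∀ k : Fin n, min p.1 p.2 ≤ k.castSucc → k.succ ≤ max p.1 p.2 → k ∈ J

/-- `v` is the minimal-length representative of its coset `vW_J`. -/
def IsMinRep {n : ℕ} (J : Set (Fin n)) (v : Equiv.Perm (Fin (n + 1))) : Prop :=
  ∀ y ∈ WJ J, len v ≤ len (v * y)

open scoped Classical

/-- Inversion set as a `Finset`. -/
noncomputable def finInv {n : ℕ} (w : Equiv.Perm (Fin n)) : Finset (Fin n × Fin n) :=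
  Finset.univ.filter fun p => p ∈ invSet w

/-- The negative roots of `Φ_J` as a `Finset`. -/
noncomputable def phiJNeg {n : ℕ} (J : Set (Fin n)) :
    Finset (Fin (n + 1) × Fin (n + 1)) :=
  Finset.univ.filter fun p => IsNegRoot p ∧ InPhiJ J p

namespace St9aux
variable {n : ℕ}

/-- `i` and `j` lie in the same `J`-block (all simple roots between them are in `J`). -/
def sb (J : Set (Fin n)) (i j : Fin (n + 1)) : Prop :=
  ∀ k : Fin n, min i j ≤ k.castSucc → k.succ ≤ max i j → k ∈ J

lemma val_min (i j : Fin (n + 1)) : (min i j).val = min i.val j.val := rfl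
lemma val_max (i j : Fin (n + 1)) : (max i j).val = max i.val j.val := rfl

lemma sb_iff {J : Set (Fin n)} {i j : Fin (n + 1)} :
    sb J i j ↔ ∀ k : Fin n, min i.val j.val ≤ k.val → k.val + 1 ≤ max i.val j.val → k ∈ J := by
  simp only [sb, Fin.le_def, val_min, val_max, Fin.coe_castSucc, Fin.val_succ]

lemma sb_symm {J : Set (Fin n)} {i j : Fin (n + 1)} (h : sb J i j) : sb J j i := by
  rw [sb_iff] at h ⊢
  intro k h1 h2
  exact h k (by omega) (by omega)

lemma sb_refl (J : Set (Fin n)) (i : Fin (n + 1)) : sb J i i := by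
  rw [sb_iff]; intro k h1 h2; omega

lemma sb_trans {J : Set (Fin n)} {i j l : Fin (n + 1)} (h1 : sb J i j) (h2 : sb J j l) :
    sb J i l := by
  rw [sb_iff] at h1 h2 ⊢
  intro k hk1 hk2
  by_cases hc : min i.val j.val ≤ k.val ∧ k.val + 1 ≤ max i.val j.val
  · exact h1 k hc.1 hc.2
  · exact h2 k (by omega) (by omega)

/-- Every element of `W_J` keeps each point inside its `J`-block. -/
lemma sbAll_of_mem {J : Set (Fin n)} {y : Equiv.Perm (Fin (n + 1))} (hy : y ∈ WJ J) :
    ∀ i, sb J i (y i) := by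
  refine Subgroup.closure_induction ?_ ?_ ?_ ?_ hy
  · rintro x ⟨k, hk, rfl⟩ i
    rcases eq_or_ne i k.castSucc with rfl | h1
    · rw [sgen, Equiv.swap_apply_left, sb_iff]
      intro k' h1 h2
      have : k' = k := by
        apply Fin.ext
        simp only [Fin.coe_castSucc, Fin.val_succ] at h1 h2
        omega
      rwa [this]
    · rcases eq_or_ne i k.succ with rfl | h2
      · rw [sgen, Equiv.swap_apply_right, sb_iff]
        intro k' h1 h2
        have : k' = k := by
          apply Fin.ext
          simp only [Fin.coe_castSucc, Fin.val_succ] at h1 h2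
          omega
        rwa [this]
      · rw [sgen, Equiv.swap_apply_of_ne_of_ne h1 h2]
        exact sb_refl J i
  · intro i
    exact sb_refl J i
  · intro x z _ _ hx hz i
    have : (x * z) i = x (z i) := rfl
    rw [this]
    exact sb_trans (hz i) (hx (z i))
  · intro x _ hx i
    have := hx (x⁻¹ i)
    rw [Equiv.Perm.coe_inv, Equiv.apply_symm_apply] at this
    exact sb_symm this

/-- Elements of `W_J` preserve the order of points in distinct `J`-blocks. -/
lemma sign_pres {J : Set (Fin n)} {z : Equiv.Perm (Fin (n + 1))}
    (hz : ∀ i, sb J i (z i)) {i j : Fin (n + 1)} (hij : i < j) (hns : ¬ sb J i j) :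
    z i < z j := by
  rw [sb_iff] at hns
  push_neg at hns
  obtain ⟨k, hk1, hk2, hkJ⟩ := hns
  rw [Fin.lt_def] at hij
  have key1 : ∀ a b : Fin (n + 1), sb J a b → a.val ≤ k.val → b.val ≤ k.val := by
    intro a b hab ha
    by_contra hb
    exact hkJ ((sb_iff.1 hab) k (by omega) (by omega))
  have key2 : ∀ a b : Fin (n + 1), sb J a b → k.val + 1 ≤ a.val → k.val + 1 ≤ b.val := by
    intro a b hab ha
    by_contra hb
    exact hkJ ((sb_iff.1 hab) k (by omega) (by omega))
  have h1 : (z i).val ≤ k.val := key1 i (z i) (hz i) (by omega)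
  have h2 : k.val + 1 ≤ (z j).val := key2 j (z j) (hz j) (by omega)
  rw [Fin.lt_def]
  omega

/-- Multiplying on the right by an adjacent transposition that undoes an inversion
decreases the length. -/
lemma len_mul_swap_lt {v : Equiv.Perm (Fin (n + 1))} {k : Fin n}
    (h : v k.succ < v k.castSucc) : len (v * sgen k) < len v := by
  set a := k.castSucc with ha
  set b := k.succ with hb
  have hab : a.val + 1 = b.val := by simp [ha, hb]
  set s := Equiv.swap a b with hs
  have hslt : ∀ x z : Fin (n + 1), x < z → ¬(x = a ∧ z = b) → s x < s z := by
    intro x z hxz hne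
    rw [not_and] at hne
    rw [Fin.lt_def] at hxz
    rw [Fin.lt_def]
    rcases eq_or_ne x a with rfl | hxa
    · rw [hs, Equiv.swap_apply_left]
      rcases eq_or_ne z b with rfl | hzb
      · exact absurd rfl (hne rfl)
      · rcases eq_or_ne z a with rfl | hza
        · omega
        · rw [Equiv.swap_apply_of_ne_of_ne hza hzb]
          have : z.val ≠ b.val := fun e => hzb (Fin.ext e)
          omega
    · rcases eq_or_ne x b with rfl | hxb
      · rw [hs, Equiv.swap_apply_right]
        have hza : z ≠ a := by
          intro e
          rw [e] at hxz
          omega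
        have hzb : z ≠ b := by
          intro e
          rw [e] at hxz
          omega
        rw [Equiv.swap_apply_of_ne_of_ne hza hzb]
        omega
      · rw [hs, Equiv.swap_apply_of_ne_of_ne hxa hxb]
        rcases eq_or_ne z a with rfl | hza
        · rw [Equiv.swap_apply_left]
          have : x.val ≠ a.val := fun e => hxa (Fin.ext e)
          omega
        · rcases eq_or_ne z b with rfl | hzb
          · rw [Equiv.swap_apply_right]
            have : x.val ≠ a.val := fun e => hxa (Fin.ext e)
            omega
          · rw [Equiv.swap_apply_of_ne_of_ne hza hzb]
            omega
  have hmem : (a, b) ∈ Finset.univ.filter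
      (fun p : Fin (n + 1) × Fin (n + 1) => p.1 < p.2 ∧ v p.2 < v p.1) := by
    simp only [Finset.mem_filter, Finset.mem_univ, true_and]
    exact ⟨by rw [Fin.lt_def]; omega, h⟩
  have hle : len (v * sgen k) ≤ ((Finset.univ.filter
      (fun p : Fin (n + 1) × Fin (n + 1) => p.1 < p.2 ∧ v p.2 < v p.1)).erase (a, b)).card := by
    apply Finset.card_le_card_of_injOn (fun p => (s p.1, s p.2))
    · intro p hp
      simp only [len, Finset.mem_coe, Finset.mem_filter, Finset.mem_univ, true_and] at hp
      obtain ⟨hp1, hp2⟩ := hp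
      have hmul : ∀ x, (v * sgen k) x = v (s x) := fun x => rfl
      rw [hmul, hmul] at hp2
      have hpne : ¬(p.1 = a ∧ p.2 = b) := by
        rintro ⟨e1, e2⟩
        rw [e1, e2, hs, Equiv.swap_apply_left, Equiv.swap_apply_right] at hp2
        exact absurd hp2 (not_lt.2 (le_of_lt h))
      rw [Finset.mem_coe]
      refine Finset.mem_erase.2 ⟨?_, ?_⟩
      · intro heq
        have e1 : s p.1 = a := congrArg Prod.fst heq
        have e2 : s p.2 = b := congrArg Prod.snd heq
        have f1 : p.1 = b := by
          have := congrArg s e1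
          rwa [hs, Equiv.swap_apply_self, Equiv.swap_apply_left] at this
        have f2 : p.2 = a := by
          have := congrArg s e2
          rwa [hs, Equiv.swap_apply_self, Equiv.swap_apply_right] at this
        rw [f1, f2, Fin.lt_def] at hp1
        omega
      · simp only [Finset.mem_filter, Finset.mem_univ, true_and]
        exact ⟨hslt p.1 p.2 hp1 hpne, hp2⟩
    · intro p _ q _ hpq
      simp only [Prod.mk.injEq] at hpq
      have := Equiv.injective s
      exact Prod.ext (this hpq.1) (this hpq.2)
  calc len (v * sgen k) ≤ _ := hle
    _ < _ := Finset.card_erase_lt_of_mem hmem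
    _ = len v := rfl

lemma minrep_adj {J : Set (Fin n)} {v : Equiv.Perm (Fin (n + 1))} (hv : IsMinRep J v)
    {k : Fin n} (hk : k ∈ J) : v k.castSucc < v k.succ := by
  rcases lt_trichotomy (v k.castSucc) (v k.succ) with h | h | h
  · exact h
  · exfalso
    have : k.castSucc = k.succ := v.injective h
    rw [Fin.ext_iff, Fin.coe_castSucc, Fin.val_succ] at this
    omega
  · exfalso
    have hmem : sgen k ∈ WJ J := Subgroup.subset_closure ⟨k, hk, rfl⟩
    exact absurd (hv (sgen k) hmem) (not_le.2 (len_mul_swap_lt h))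

lemma minrep_step {J : Set (Fin n)} {v : Equiv.Perm (Fin (n + 1))} (hv : IsMinRep J v)
    {i j : Fin (n + 1)} (hij : j.val = i.val + 1) (hsb : sb J i j) : v i < v j := by
  have hi : i.val < n := by omega
  set k : Fin n := ⟨i.val, hi⟩ with hk
  have hkc : k.castSucc = i := by simp [hk, Fin.ext_iff]
  have hks : k.succ = j := by simp [hk, Fin.ext_iff]; try omega
  have ha1 : min i.val j.val ≤ i.val := by omega
  have ha2 : i.val + 1 ≤ max i.val j.val := by omega
  have hkJ : k ∈ J := (sb_iff.1 hsb) k ha1 ha2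
  rw [← hkc, ← hks]
  exact minrep_adj hv hkJ

lemma minrep_mono {J : Set (Fin n)} {v : Equiv.Perm (Fin (n + 1))} (hv : IsMinRep J v) :
    ∀ d : ℕ, ∀ i j : Fin (n + 1), j.val = i.val + d + 1 → sb J i j → v i < v j := by
  intro d
  induction d with
  | zero => exact fun i j hij hsb => minrep_step hv (by omega) hsb
  | succ d ih =>
    intro i j hij hsb
    have hii : i.val + 1 < n + 1 := by omega
    set i' : Fin (n + 1) := ⟨i.val + 1, hii⟩ with hi'
    have hsb1 : sb J i i' := by
      rw [sb_iff]
      intro k hk1 hk2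
      exact (sb_iff.1 hsb) k (by simp [hi'] at hk1 hk2 ⊢; omega)
        (by simp [hi'] at hk1 hk2 ⊢; omega)
    have hsb2 : sb J i' j := by
      rw [sb_iff]
      intro k hk1 hk2
      exact (sb_iff.1 hsb) k (by simp [hi'] at hk1 hk2 ⊢; omega)
        (by simp [hi'] at hk1 hk2 ⊢; omega)
    exact lt_trans (minrep_step hv (by simp [hi']) hsb1) (ih i' j (by simp [hi']; omega) hsb2)

/-- A minimal coset representative is increasing on each `J`-block. -/
lemma minrep_lt {J : Set (Fin n)} {v : Equiv.Perm (Fin (n + 1))} (hv : IsMinRep J v)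
    {i j : Fin (n + 1)} (hij : i < j) (hsb : sb J i j) : v i < v j := by
  rw [Fin.lt_def] at hij
  exact minrep_mono hv (j.val - i.val - 1) i j (by omega) hsb

end St9aux

/-- for any subset `𝒱 ⊆ Φ⁺` and `w = vy` with `v` minimal in `wW_J`,
`y ∈ W_J`: `|N(w⁻¹) ∩ 𝒱ᶜ| + |N(w⁻¹) ∩ 𝒱 ∩ w(Φ_J⁻)| = |N(v⁻¹) ∩ 𝒱ᶜ| + ℓ(y)`. -/
theorem statement9 {n : ℕ} (J : Set (Fin n)) (V : Finset (Fin (n + 1) × Fin (n + 1)))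
    (hV : ∀ p ∈ V, IsPosRoot p) (v y w : Equiv.Perm (Fin (n + 1)))
    (hv : IsMinRep J v) (hy : y ∈ WJ J) (hw : w = v * y) :
    (finInv w⁻¹ \ V).card +
      ((finInv w⁻¹ ∩ V) ∩ (phiJNeg J).image (actRoot w)).card =
    (finInv v⁻¹ \ V).card + len y := by
  classical
  have hw1 : ∀ x, w x = v (y x) := fun x => by rw [hw]; rfl
  have hw2 : ∀ x, w⁻¹ x = y⁻¹ (v⁻¹ x) := fun x => by rw [hw, mul_inv_rev]; rfl
  have hw3 : ∀ x, v⁻¹ x = y (w⁻¹ x) := fun x => by rw [hw2]; exact (Equiv.apply_symm_apply y _).symm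
  have hzy : ∀ i, St9aux.sb J i (y i) := St9aux.sbAll_of_mem hy
  have hzyi : ∀ i, St9aux.sb J i (y⁻¹ i) := St9aux.sbAll_of_mem ((WJ J).inv_mem hy)
  set Bim := (phiJNeg J).image (actRoot w) with hBim
  set B := Bim.filter IsPosRoot with hB
  have hmemInv : ∀ (u : Equiv.Perm (Fin (n + 1))) (p : Fin (n + 1) × Fin (n + 1)),
      p ∈ finInv u ↔ p.1 < p.2 ∧ u p.2 < u p.1 := by
    intro u p
    simp only [finInv, Finset.mem_filter, Finset.mem_univ, true_and]
    exact Iff.rfl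
  have hmemBim : ∀ p : Fin (n + 1) × Fin (n + 1),
      p ∈ Bim ↔ (w⁻¹ p.2 < w⁻¹ p.1 ∧ St9aux.sb J (w⁻¹ p.1) (w⁻¹ p.2)) := by
    intro p
    rw [hBim, Finset.mem_image]
    constructor
    · rintro ⟨q, hq, rfl⟩
      simp only [phiJNeg, Finset.mem_filter, Finset.mem_univ, true_and] at hq
      obtain ⟨hneg, hne, hin⟩ := hq
      have e1 : w⁻¹ (actRoot w q).1 = q.1 := w.symm_apply_apply q.1
      have e2 : w⁻¹ (actRoot w q).2 = q.2 := w.symm_apply_apply q.2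
      rw [e1, e2]
      exact ⟨hneg, hin⟩
    · rintro ⟨hneg, hsb⟩
      refine ⟨(w⁻¹ p.1, w⁻¹ p.2), ?_, ?_⟩
      · simp only [phiJNeg, Finset.mem_filter, Finset.mem_univ, true_and]
        exact ⟨hneg, ne_of_gt hneg, hsb⟩
      · show (w (w⁻¹ p.1), w (w⁻¹ p.2)) = p
        exact Prod.ext (w.apply_symm_apply _) (w.apply_symm_apply _)
  have h1 : finInv w⁻¹ = finInv v⁻¹ ∪ B := by
    ext p
    rw [Finset.mem_union, hmemInv w⁻¹ p, hmemInv v⁻¹ p]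
    constructor
    · rintro ⟨hpos, hinv⟩
      by_cases hsb : St9aux.sb J (w⁻¹ p.1) (w⁻¹ p.2)
      · right
        rw [hB, Finset.mem_filter, hmemBim]
        exact ⟨⟨hinv, hsb⟩, hpos⟩
      · left
        refine ⟨hpos, ?_⟩
        rw [hw3, hw3]
        exact St9aux.sign_pres hzy hinv (fun hc => hsb (St9aux.sb_symm hc))
    · rintro (⟨hpos, hinv⟩ | hmem)
      · refine ⟨hpos, ?_⟩
        by_cases hsb : St9aux.sb J (v⁻¹ p.2) (v⁻¹ p.1)
        · exfalso
          have hlt := St9aux.minrep_lt hv hinv hsb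
          simp only [Equiv.Perm.coe_inv, Equiv.apply_symm_apply] at hlt
          exact absurd hpos (not_lt.2 (le_of_lt hlt))
        · have hlt := St9aux.sign_pres hzyi hinv hsb
          rw [← hw2, ← hw2] at hlt
          exact hlt
      · rw [hB, Finset.mem_filter, hmemBim] at hmem
        exact ⟨hmem.2, hmem.1.1⟩
  have h2 : Disjoint (finInv v⁻¹) B := by
    rw [Finset.disjoint_left]
    intro p hpA hpB
    rw [hmemInv] at hpA
    rw [hB, Finset.mem_filter, hmemBim] at hpB
    obtain ⟨⟨hneg, hsb⟩, hpos⟩ := hpB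
    obtain ⟨-, hvinv⟩ := hpA
    rw [hw3, hw3] at hvinv
    have hsb2 : St9aux.sb J (y (w⁻¹ p.2)) (y (w⁻¹ p.1)) :=
      St9aux.sb_trans (St9aux.sb_trans (St9aux.sb_symm (hzy _)) (St9aux.sb_symm hsb)) (hzy _)
    have hlt := St9aux.minrep_lt hv hvinv hsb2
    rw [← hw1, ← hw1] at hlt
    simp only [Equiv.Perm.coe_inv, Equiv.apply_symm_apply] at hlt
    exact absurd hpos (not_lt.2 (le_of_lt hlt))
  have h3 : (finInv w⁻¹ ∩ V) ∩ Bim = B ∩ V := by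
    ext p
    simp only [Finset.mem_inter]
    constructor
    · rintro ⟨⟨hw', hV'⟩, hBim'⟩
      exact ⟨Finset.mem_filter.2 ⟨hBim', ((hmemInv _ p).1 hw').1⟩, hV'⟩
    · rintro ⟨hB', hV'⟩
      rw [hB, Finset.mem_filter] at hB'
      obtain ⟨hBim', hpos⟩ := hB'
      refine ⟨⟨?_, hV'⟩, hBim'⟩
      rw [hmemInv]
      exact ⟨hpos, ((hmemBim p).1 hBim').1⟩
  have hinj : Function.Injective (actRoot w) := by
    intro p q hpq
    exact Prod.ext (w.injective (congrArg Prod.fst hpq)) (w.injective (congrArg Prod.snd hpq))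
  set D := (phiJNeg J).filter (fun q => IsPosRoot (actRoot w q)) with hD
  have hBD : B = D.image (actRoot w) := by
    ext p
    rw [hB, hBim, hD]
    simp only [Finset.mem_filter, Finset.mem_image]
    constructor
    · rintro ⟨⟨q, hq, rfl⟩, hpos⟩
      exact ⟨q, ⟨hq, hpos⟩, rfl⟩
    · rintro ⟨q, ⟨hq, hpos⟩, rfl⟩
      exact ⟨⟨q, hq, rfl⟩, hpos⟩
  have h4 : B.card = len y := by
    rw [hBD, Finset.card_image_of_injective _ hinj]
    show D.card = (Finset.univ.filter
      fun r : Fin (n + 1) × Fin (n + 1) => r.1 < r.2 ∧ y r.2 < y r.1).card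
    apply Finset.card_bij (fun q _ => (q.2, q.1))
    · intro q hq
      rw [hD, Finset.mem_filter] at hq
      obtain ⟨hq1, hq2⟩ := hq
      simp only [phiJNeg, Finset.mem_filter, Finset.mem_univ, true_and] at hq1
      obtain ⟨hneg, hne, hin⟩ := hq1
      simp only [Finset.mem_filter, Finset.mem_univ, true_and]
      refine ⟨hneg, ?_⟩
      rcases lt_trichotomy (y q.1) (y q.2) with hlt | heq | hgt
      · exact hlt
      · exact absurd (y.injective heq) hne
      · exfalso
        have hsb2 : St9aux.sb J (y q.2) (y q.1) :=
          St9aux.sb_trans (St9aux.sb_trans (St9aux.sb_symm (hzy _)) (St9aux.sb_symm hin)) (hzy _)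
        have hlt := St9aux.minrep_lt hv hgt hsb2
        rw [← hw1, ← hw1] at hlt
        exact absurd hq2 (not_lt.2 (le_of_lt hlt))
    · intro q1 h1' q2 h2' he
      exact Prod.ext (congrArg Prod.snd he) (congrArg Prod.fst he)
    · intro r hr
      simp only [Finset.mem_filter, Finset.mem_univ, true_and] at hr
      obtain ⟨hr1, hr2⟩ := hr
      have hsbr : St9aux.sb J r.1 r.2 := by
        by_contra hns
        exact absurd (St9aux.sign_pres hzy hr1 hns) (not_lt.2 (le_of_lt hr2))
      refine ⟨(r.2, r.1), ?_, Prod.mk.eta⟩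
      rw [hD, Finset.mem_filter]
      constructor
      · simp only [phiJNeg, Finset.mem_filter, Finset.mem_univ, true_and]
        exact ⟨hr1, ne_of_gt hr1, St9aux.sb_symm hsbr⟩
      · have hsb2 : St9aux.sb J (y r.2) (y r.1) :=
          St9aux.sb_trans (St9aux.sb_trans (St9aux.sb_symm (hzy _)) (St9aux.sb_symm hsbr)) (hzy _)
        have hlt := St9aux.minrep_lt hv hr2 hsb2
        rw [← hw1, ← hw1] at hlt
        exact hlt
  have hsplit : (finInv w⁻¹ \ V).card = (finInv v⁻¹ \ V).card + (B \ V).card := by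
    rw [h1, Finset.union_sdiff_distrib]
    exact Finset.card_union_of_disjoint (h2.mono Finset.sdiff_subset Finset.sdiff_subset)
  have hBV : (B ∩ V).card + (B \ V).card = B.card := Finset.card_inter_add_card_sdiff B V
  rw [h3, hsplit]
  omega
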